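/- arXiv:2411.17978 — 2 statements merged into one kernel-verified Lean document; each statement's English description precedes it below -/
import Mathlib

section
/- Let $(X,\mathcal{A},\mu)$ be a probability space and let $u : X \to [0,\infty)$ be a bounded measurable function with essential supremum $M = \|u\|_{L^\infty(\mu)}$. Let $\tau > 1$, $\beta \ge 0$, and $A, K \ge 1$ be real numbers such that for every real $q \ge 1$ one has $\|u\|_{L^{q\tau}(\mu)} \le (Aq)^{1/q} K^{1/q} M^{\beta/q} \|u\|_{L^{q}(\mu)}$. Then $M \le A^{\tau/(\tau-1)} \, \tau^{\tau/(\tau-1)^2} \, K^{\tau/(\tau-1)} \, M^{\beta\tau/(\tau-1)} \, \|u\|_{L^1(\mu)}$. -/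
open MeasureTheory Real Filter

/-- Limiting Moser-type iteration estimate (Step 2 of the proof of the linear `C⁰`-bound for the
inverse Monge-Ampère flow, abstracted to measure theory): if a bounded nonnegative measurable
function `u` on a probability space, with essential supremum `M`, satisfies
`‖u‖_{qτ} ≤ (Aq)^{1/q} K^{1/q} M^{β/q} ‖u‖_q` for all `q ≥ 1`, then
`M ≤ A^{τ/(τ-1)} τ^{τ/(τ-1)²} K^{τ/(τ-1)} M^{βτ/(τ-1)} ‖u‖_{L¹}`. -/
theorem moser_iteration_limit
    {X : Type*} [MeasurableSpace X] (μ : Measure X) [IsProbabilityMeasure μ]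
    (u : X → ℝ) (hu_meas : Measurable u) (hu_nonneg : ∀ x, 0 ≤ u x)
    (hu_bdd : ∃ C : ℝ, ∀ x, u x ≤ C)
    (M : ℝ) (hM : M = essSup u μ)
    (τ β A K : ℝ) (hτ : 1 < τ) (hβ : 0 ≤ β) (hA : 1 ≤ A) (hK : 1 ≤ K)
    (hiter : ∀ q : ℝ, 1 ≤ q →
      (∫ x, u x ^ (q * τ) ∂μ) ^ (1 / (q * τ)) ≤
        (A * q) ^ (1 / q) * K ^ (1 / q) * M ^ (β / q) * (∫ x, u x ^ q ∂μ) ^ (1 / q)) :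
    M ≤ A ^ (τ / (τ - 1)) * τ ^ (τ / (τ - 1) ^ 2) * K ^ (τ / (τ - 1)) *
      M ^ (β * τ / (τ - 1)) * ∫ x, u x ∂μ := by
  obtain ⟨C0, hC0⟩ := hu_bdd
  have hτ0 : (0 : ℝ) < τ := by linarith
  have hτne : τ ≠ 0 := ne_of_gt hτ0
  have hA0 : (0 : ℝ) < A := by linarith
  have hK0 : (0 : ℝ) < K := by linarith
  set m1 : ℝ := ∫ x, u x ∂μ with hm1
  have hm1nonneg : 0 ≤ m1 := integral_nonneg hu_nonneg
  -- boundedness of u along ae μ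
  have hbdd : IsBoundedUnder (· ≤ ·) (ae μ) u := ⟨C0, Filter.eventually_map.mpr (Eventually.of_forall hC0)⟩
  -- M ≥ 0
  have hMnonneg : 0 ≤ M := by
    rw [hM]
    exact le_limsup_of_frequently_le
      ((Eventually.of_forall hu_nonneg : ∀ᵐ x ∂μ, 0 ≤ u x).frequently) hbdd
  -- RHS nonnegativity
  have hRHS0 : 0 ≤ A ^ (τ / (τ - 1)) * τ ^ (τ / (τ - 1) ^ 2) * K ^ (τ / (τ - 1)) *
      M ^ (β * τ / (τ - 1)) * m1 :=
    mul_nonneg (mul_nonneg (mul_nonneg (mul_nonneg (rpow_nonneg hA0.le _)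
      (rpow_nonneg hτ0.le _)) (rpow_nonneg hK0.le _)) (rpow_nonneg hMnonneg _)) hm1nonneg
  rcases eq_or_lt_of_le hMnonneg with hM0 | hM0
  · exact hM0.ge.trans hRHS0
  -- main case : M > 0
  set r : ℝ := τ⁻¹ with hr
  have hr0 : 0 < r := inv_pos.mpr hτ0
  have hr1 : r < 1 := inv_lt_one_of_one_lt₀ hτ
  -- integrability of powers of u
  set Cb : ℝ := max C0 0 with hCb
  have hCb0 : 0 ≤ Cb := le_max_right _ _
  have hint : ∀ q : ℝ, 0 ≤ q → Integrable (fun x => u x ^ q) μ := by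
    intro q hq
    refine Integrable.mono' (integrable_const (Cb ^ q))
      (((Real.continuous_rpow_const hq).measurable.comp hu_meas).aestronglyMeasurable) (Eventually.of_forall fun x => ?_)
    rw [Real.norm_eq_abs, abs_of_nonneg (rpow_nonneg (hu_nonneg x) q)]
    exact Real.rpow_le_rpow (hu_nonneg x) ((hC0 x).trans (le_max_left _ _)) hq
  -- partial sums
  set s : ℕ → ℝ := fun n => ∑ k ∈ Finset.range n, r ^ k with hs
  set t : ℕ → ℝ := fun n => ∑ k ∈ Finset.range n, (k : ℝ) * r ^ k with ht
  -- the iteration bound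
  have key : ∀ n : ℕ, (∫ x, u x ^ ((τ : ℝ) ^ n) ∂μ) ^ (r ^ n) ≤
      A ^ (s n) * τ ^ (t n) * K ^ (s n) * M ^ (β * s n) * m1 := by
    intro n
    induction n with
    | zero =>
      simp only [pow_zero, rpow_one, hs, ht, Finset.range_zero, Finset.sum_empty,
        mul_zero, rpow_zero, one_mul]
      exact hm1.ge
    | succ n ih =>
      have hq1 : (1 : ℝ) ≤ τ ^ n := one_le_pow₀ hτ.le
      have hq0 : (0 : ℝ) < τ ^ n := by positivity
      have h1q : 1 / (τ ^ n : ℝ) = r ^ n := by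
        rw [one_div, hr, inv_pow]
      have h1qt : 1 / ((τ : ℝ) ^ n * τ) = r ^ (n + 1) := by
        rw [one_div, ← pow_succ, hr, inv_pow]
      have hstep := hiter (τ ^ n) hq1
      rw [h1q, h1qt, ← pow_succ] at hstep
      have hfacnn : 0 ≤ (A * τ ^ n) ^ (r ^ n) * K ^ (r ^ n) * M ^ (β / τ ^ n) := by
        have : (0:ℝ) ≤ A * τ ^ n := by positivity
        exact mul_nonneg (mul_nonneg (rpow_nonneg this _) (rpow_nonneg hK0.le _))
          (rpow_nonneg hM0.le _)
      calc (∫ x, u x ^ ((τ : ℝ) ^ (n + 1)) ∂μ) ^ (r ^ (n + 1))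
          ≤ (A * τ ^ n) ^ (r ^ n) * K ^ (r ^ n) * M ^ (β / τ ^ n) *
            ((∫ x, u x ^ ((τ : ℝ) ^ n) ∂μ) ^ (r ^ n)) := hstep
        _ ≤ (A * τ ^ n) ^ (r ^ n) * K ^ (r ^ n) * M ^ (β / τ ^ n) *
            (A ^ (s n) * τ ^ (t n) * K ^ (s n) * M ^ (β * s n) * m1) :=
            mul_le_mul_of_nonneg_left ih hfacnn
        _ = A ^ (s (n + 1)) * τ ^ (t (n + 1)) * K ^ (s (n + 1)) * M ^ (β * s (n + 1)) * m1 := by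
            have hsn : s (n + 1) = s n + r ^ n := Finset.sum_range_succ _ _
            have htn : t (n + 1) = t n + (n : ℝ) * r ^ n := Finset.sum_range_succ _ _
            have hAτ : (A * τ ^ n) ^ (r ^ n) = A ^ (r ^ n) * τ ^ ((n : ℝ) * r ^ n) := by
              rw [Real.mul_rpow hA0.le (by positivity), ← Real.rpow_natCast τ n,
                ← Real.rpow_mul hτ0.le]
            have hβq : β / (τ : ℝ) ^ n = β * r ^ n := by
              rw [div_eq_mul_inv, hr, inv_pow]
            rw [hAτ, hβq, hsn, htn,
              Real.rpow_add hA0 (s n) (r ^ n), Real.rpow_add hτ0 (t n),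
              Real.rpow_add hK0 (s n) (r ^ n), mul_add β (s n) (r ^ n),
              Real.rpow_add hM0 (β * s n) (β * r ^ n)]
            ring
  -- limits of the partial sums
  have hτ1 : τ - 1 ≠ 0 := by intro h; linarith [hτ]
  have hSval : (1 - r)⁻¹ = τ / (τ - 1) := by
    rw [hr]; field_simp
  have hTval : r / (1 - r) ^ 2 = τ / (τ - 1) ^ 2 := by
    rw [hr]; field_simp
  have hsS : Tendsto s atTop (nhds (τ / (τ - 1))) := by
    have := (hasSum_geometric_of_lt_one hr0.le hr1).tendsto_sum_nat
    rwa [hSval] at this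
  have htT : Tendsto t atTop (nhds (τ / (τ - 1) ^ 2)) := by
    have := (hasSum_coe_mul_geometric_of_norm_lt_one
      (r := r) (by rwa [Real.norm_eq_abs, abs_of_pos hr0])).tendsto_sum_nat
    rwa [hTval] at this
  -- the right-hand side tends to the constant
  have hg : Tendsto (fun n => A ^ (s n) * τ ^ (t n) * K ^ (s n) * M ^ (β * s n) * m1) atTop
      (nhds (A ^ (τ / (τ - 1)) * τ ^ (τ / (τ - 1) ^ 2) * K ^ (τ / (τ - 1)) *
        M ^ (β * τ / (τ - 1)) * m1)) := by
    have h1 : Tendsto (fun n => A ^ (s n)) atTop (nhds (A ^ (τ / (τ - 1)))) :=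
      Tendsto.rpow tendsto_const_nhds hsS (Or.inl hA0.ne')
    have h2 : Tendsto (fun n => τ ^ (t n)) atTop (nhds (τ ^ (τ / (τ - 1) ^ 2))) :=
      Tendsto.rpow tendsto_const_nhds htT (Or.inl hτ0.ne')
    have h3 : Tendsto (fun n => K ^ (s n)) atTop (nhds (K ^ (τ / (τ - 1)))) :=
      Tendsto.rpow tendsto_const_nhds hsS (Or.inl hK0.ne')
    have h4 : Tendsto (fun n => M ^ (β * s n)) atTop (nhds (M ^ (β * τ / (τ - 1)))) := by
      have : Tendsto (fun n => β * s n) atTop (nhds (β * (τ / (τ - 1)))) := hsS.const_mul β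
      have h := Tendsto.rpow (g := fun n => β * s n) tendsto_const_nhds this (Or.inl hM0.ne')
      rwa [mul_div_assoc]
    exact (((h1.mul h2).mul h3).mul h4).mul_const m1
  -- now show M ≤ C * m1 using levels c < M
  have hmain : ∀ c : ℝ, 0 < c → c < M →
      c ≤ A ^ (τ / (τ - 1)) * τ ^ (τ / (τ - 1) ^ 2) * K ^ (τ / (τ - 1)) *
        M ^ (β * τ / (τ - 1)) * m1 := by
    intro c hc0 hcM
    set S : Set X := {x | c < u x} with hS
    have hSmeas : MeasurableSet S := measurableSet_lt measurable_const hu_meas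
    have hSne : μ S ≠ 0 := by
      intro h0
      have hae : ∀ᵐ x ∂μ, u x ≤ c := by
        rw [ae_iff]
        convert h0 using 2
        ext x
        simp [hS, not_le]
      have : essSup u μ ≤ c := limsup_le_of_le
        (isCoboundedUnder_le_of_eventually_le (ae μ) (x := 0)
          (Eventually.of_forall hu_nonneg)) hae
      rw [← hM] at this
      linarith
    have hSfin : μ S ≠ ⊤ := measure_ne_top μ S
    set mS : ℝ := (μ S).toReal with hmS
    have hmS0 : 0 < mS := ENNReal.toReal_pos hSne hSfin
    -- lower bound for each n
    have hlow : ∀ n : ℕ, c * mS ^ (r ^ n) ≤ (∫ x, u x ^ ((τ : ℝ) ^ n) ∂μ) ^ (r ^ n) := by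
      intro n
      have hqn0 : (0 : ℝ) ≤ τ ^ n := by positivity
      have hineq : c ^ ((τ : ℝ) ^ n) * mS ≤ ∫ x, u x ^ ((τ : ℝ) ^ n) ∂μ := by
        have hind : ∫ x, S.indicator (fun _ => c ^ ((τ : ℝ) ^ n)) x ∂μ =
            mS * c ^ ((τ : ℝ) ^ n) := by
          rw [integral_indicator_const _ hSmeas]; simp [hmS, smul_eq_mul, measureReal_def]
        rw [mul_comm, ← hind]
        refine integral_mono ((integrable_const _).indicator hSmeas) (hint _ hqn0) ?_
        intro x
        by_cases hx : x ∈ S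
        · simp only [Set.indicator_of_mem hx]
          exact Real.rpow_le_rpow hc0.le (le_of_lt hx) hqn0
        · simp only [Set.indicator_of_notMem hx]
          exact rpow_nonneg (hu_nonneg x) _
      have hlhs0 : 0 ≤ c ^ ((τ : ℝ) ^ n) * mS :=
        mul_nonneg (rpow_nonneg hc0.le _) hmS0.le
      have := Real.rpow_le_rpow hlhs0 hineq (by positivity : (0:ℝ) ≤ r ^ n)
      rwa [Real.mul_rpow (rpow_nonneg hc0.le _) hmS0.le, ← Real.rpow_mul hc0.le,
        show (τ : ℝ) ^ n * r ^ n = 1 by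
          rw [hr, ← mul_pow, mul_inv_cancel₀ hτne, one_pow],
        Real.rpow_one] at this
    -- limit of the lower bound
    have hf : Tendsto (fun n => c * mS ^ (r ^ n)) atTop (nhds c) := by
      have hrn : Tendsto (fun n : ℕ => r ^ n) atTop (nhds 0) :=
        tendsto_pow_atTop_nhds_zero_of_lt_one hr0.le hr1
      have : Tendsto (fun n : ℕ => mS ^ (r ^ n)) atTop (nhds (mS ^ (0 : ℝ))) :=
        Tendsto.rpow tendsto_const_nhds hrn (Or.inl hmS0.ne')
      rw [Real.rpow_zero] at this
      simpa using this.const_mul c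
    exact le_of_tendsto_of_tendsto' hf hg fun n => (hlow n).trans (key n)
  -- conclude
  by_contra hcon
  push_neg at hcon
  set Cm : ℝ := A ^ (τ / (τ - 1)) * τ ^ (τ / (τ - 1) ^ 2) * K ^ (τ / (τ - 1)) *
    M ^ (β * τ / (τ - 1)) * m1 with hCm
  have hc1 : Cm < (Cm + M) / 2 := by linarith
  have hc2 : (Cm + M) / 2 < M := by linarith
  have hc0 : 0 < (Cm + M) / 2 := by
    have : 0 ≤ Cm := hRHS0
    linarith
  exact absurd (hmain _ hc0 hc2) (not_le.mpr hc1)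
end

section
/- Let $(X,\mathcal{A},\mu)$ be a probability space and let $u : X \to [0,\infty)$ be a bounded measurable function, not $\mu$-almost everywhere equal to $0$, with essential supremum $M = \|u\|_{L^\infty(\mu)}$. Let $\tau > 1$, $\beta \ge 0$, and $A, K \ge 1$ be real numbers such that $\gamma := \beta\tau/(\tau-1) < 1$ and such that for every real $q \ge 1$ one has $\|u\|_{L^{q\tau}(\mu)} \le (Aq)^{1/q} K^{1/q} M^{\beta/q} \|u\|_{L^{q}(\mu)}$. If moreover $\|u\|_{L^1(\mu)} \le e^{L}$ for some real number $L$, then $\log M \le \frac{1}{1-\gamma}\Big(\frac{\tau}{\tau-1}\log(AK) + \frac{\tau}{(\tau-1)^2}\log\tau + L\Big)$. -/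
open MeasureTheory Real Filter

/-- Quantitative sup-norm bound (combination of Steps 2 and 3 of the proof of the linear
`C⁰`-bound for the inverse Monge-Ampère flow): if a bounded nonnegative measurable function `u`
on a probability space, not a.e. zero, with essential supremum `M`, satisfies the one-step
iteration inequality `‖u‖_{qτ} ≤ (Aq)^{1/q} K^{1/q} M^{β/q} ‖u‖_q` for all `q ≥ 1`, where
`γ = βτ/(τ-1) < 1`, and if `‖u‖_{L¹} ≤ e^L`, then
`log M ≤ (1/(1-γ)) ((τ/(τ-1)) log(AK) + (τ/(τ-1)²) log τ + L)`. -/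
theorem moser_iteration_log_sup_bound
    {X : Type*} [MeasurableSpace X] (μ : Measure X) [IsProbabilityMeasure μ]
    (u : X → ℝ) (hu_meas : Measurable u) (hu_nonneg : ∀ x, 0 ≤ u x)
    (hu_bdd : ∃ C : ℝ, ∀ x, u x ≤ C)
    (hu_ne : ¬ (u =ᵐ[μ] 0))
    (M : ℝ) (hM : M = essSup u μ)
    (τ β A K : ℝ) (hτ : 1 < τ) (hβ : 0 ≤ β) (hA : 1 ≤ A) (hK : 1 ≤ K)
    (hγ : β * τ / (τ - 1) < 1)
    (hiter : ∀ q : ℝ, 1 ≤ q →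
      (∫ x, u x ^ (q * τ) ∂μ) ^ (1 / (q * τ)) ≤
        (A * q) ^ (1 / q) * K ^ (1 / q) * M ^ (β / q) * (∫ x, u x ^ q ∂μ) ^ (1 / q))
    (L : ℝ) (hL : ∫ x, u x ∂μ ≤ Real.exp L) :
    Real.log M ≤ (1 / (1 - β * τ / (τ - 1))) *
      ((τ / (τ - 1)) * Real.log (A * K) + (τ / (τ - 1) ^ 2) * Real.log τ + L) := by
  obtain ⟨C, hC⟩ := hu_bdd
  have hτ0 : (0:ℝ) < τ := by linarith
  have hμne : μ ≠ 0 := IsProbabilityMeasure.ne_zero μ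
  haveI hμae : (ae μ).NeBot := ae_neBot.mpr hμne
  have hbdd : IsBoundedUnder (· ≤ ·) (ae μ) u :=
    ⟨C, Filter.eventually_map.2 (Eventually.of_forall hC)⟩
  have huM : ∀ᵐ x ∂μ, u x ≤ M := by
    rw [hM]; exact ae_le_essSup hbdd
  have hM0 : 0 < M := by
    by_contra h
    push_neg at h
    apply hu_ne
    filter_upwards [huM] with x hx
    have : u x = 0 := le_antisymm (hx.trans h) (hu_nonneg x)
    simpa using this
  -- integrability of powers
  have hint : ∀ q : ℝ, 0 ≤ q → Integrable (fun x => u x ^ q) μ := by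
    intro q hq
    have hmeas : Measurable fun x => u x ^ q :=
      (Real.continuous_rpow_const hq).measurable.comp hu_meas
    refine (integrable_const ((max C 1) ^ q)).mono' hmeas.aestronglyMeasurable ?_
    filter_upwards with x
    rw [Real.norm_eq_abs, abs_of_nonneg (Real.rpow_nonneg (hu_nonneg x) q)]
    exact Real.rpow_le_rpow (hu_nonneg x)
      ((hC x).trans (le_max_left _ _)) hq
  -- the key estimate for every 0 < c < M
  have key : ∀ c : ℝ, 0 < c → c < M →
      Real.log c ≤ L + (Real.log (A * K) + β * Real.log M) * (τ / (τ - 1)) +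
        Real.log τ * (τ / (τ - 1) ^ 2) := by
    intro c hc0 hcM
    set s : Set X := {x | c < u x} with hs_def
    have hs_meas : MeasurableSet s := measurableSet_lt measurable_const hu_meas
    have hs_ne : μ s ≠ 0 := by
      intro h0
      have hle : ∀ᵐ x ∂μ, u x ≤ c := by
        rw [ae_iff]
        simpa [hs_def, not_le] using h0
      have hcob : IsCoboundedUnder (· ≤ ·) (ae μ) u :=
        isCoboundedUnder_le_of_le (ae μ) (x := 0) hu_nonneg
      have : essSup u μ ≤ c := limsup_le_of_le hcob hle
      rw [← hM] at this
      linarith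
    set δ : ℝ := (μ s).toReal with hδ_def
    have hδ0 : 0 < δ := ENNReal.toReal_pos hs_ne (measure_ne_top μ s)
    -- lower bound for the integrals
    have hIlow : ∀ q : ℝ, 0 ≤ q → c ^ q * δ ≤ ∫ x, u x ^ q ∂μ := by
      intro q hq
      have h1 : c ^ q * δ ≤ ∫ x in s, u x ^ q ∂μ := by
        refine setIntegral_ge_of_const_le_real hs_meas (measure_ne_top μ s) ?_
          ((hint q hq).integrableOn)
        intro x hx
        exact Real.rpow_le_rpow hc0.le (le_of_lt hx) hq
      refine h1.trans (setIntegral_le_integral (hint q hq) ?_)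
      filter_upwards with x
      exact Real.rpow_nonneg (hu_nonneg x) q
    have hIpos : ∀ q : ℝ, 0 ≤ q → 0 < ∫ x, u x ^ q ∂μ := fun q hq =>
      lt_of_lt_of_le (by positivity) (hIlow q hq)
    -- the iteration sequence
    set I : ℝ → ℝ := fun q => ∫ x, u x ^ q ∂μ with hI_def
    set b : ℕ → ℝ := fun n => Real.log (I (τ ^ n)) / τ ^ n with hb_def
    have hτpown : ∀ n : ℕ, (1:ℝ) ≤ τ ^ n := fun n => one_le_pow₀ hτ.le
    have hτpow0 : ∀ n : ℕ, (0:ℝ) < τ ^ n := fun n => lt_of_lt_of_le one_pos (hτpown n)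
    -- one-step inequality in log form
    have hstep : ∀ n : ℕ, b (n + 1) ≤ b n +
        (Real.log (A * K) + β * Real.log M) * (τ⁻¹) ^ n +
        Real.log τ * ((n : ℝ) * (τ⁻¹) ^ n) := by
      intro n
      set q : ℝ := τ ^ n with hq_def
      have hq1 : 1 ≤ q := hτpown n
      have hq0 : 0 < q := hτpow0 n
      have hIq : 0 < I q := hIpos q hq0.le
      have hIqτ : 0 < I (q * τ) := hIpos _ (by positivity)
      have h := hiter q hq1
      have hlog := Real.log_le_log (by positivity : (0:ℝ) < I (q*τ) ^ (1/(q*τ))) h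
      rw [Real.log_rpow hIqτ, Real.log_mul (by positivity) (ne_of_gt (Real.rpow_pos_of_pos hIq _)),
        Real.log_mul (by positivity) (ne_of_gt (Real.rpow_pos_of_pos hM0 _)),
        Real.log_mul (by positivity) (ne_of_gt (Real.rpow_pos_of_pos (by linarith : (0:ℝ) < K) _)),
        Real.log_rpow (by positivity : (0:ℝ) < A * q),
        Real.log_rpow (by linarith : (0:ℝ) < K),
        Real.log_rpow hM0, Real.log_rpow hIq,
        Real.log_mul (by linarith : A ≠ 0) (ne_of_gt hq0)] at hlog
      have hqτ : q * τ = τ ^ (n + 1) := by rw [hq_def, pow_succ]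
      have hlogq : Real.log q = (n : ℝ) * Real.log τ := by
        rw [hq_def, Real.log_pow]
      have hinv : 1 / q = (τ⁻¹) ^ n := by
        rw [hq_def, one_div, inv_pow]
      have hlogAK : Real.log (A * K) = Real.log A + Real.log K :=
        Real.log_mul (by linarith) (by linarith)
      have hb1 : b (n + 1) = 1 / (q * τ) * Real.log (I (q * τ)) := by
        rw [hb_def]; simp only; rw [hqτ]; ring
      have hb2 : b n = 1 / q * Real.log (I q) := by
        rw [hb_def]; simp only [hq_def]; ring
      rw [← hb1] at hlog
      calc b (n + 1) ≤ 1 / q * (Real.log A + Real.log q) + 1 / q * Real.log K +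
            β / q * Real.log M + 1 / q * Real.log (I q) := by linarith
        _ = b n + (Real.log (A * K) + β * Real.log M) * (τ⁻¹) ^ n +
            Real.log τ * ((n : ℝ) * (τ⁻¹) ^ n) := by
            rw [hb2, hlogq, hlogAK, ← hinv]
            field_simp
            ring
    -- telescoped bound
    set D : ℝ := Real.log (A * K) + β * Real.log M with hD_def
    have hsum : ∀ n : ℕ, b n ≤ b 0 + D * (∑ k ∈ Finset.range n, (τ⁻¹) ^ k) +
        Real.log τ * (∑ k ∈ Finset.range n, (k : ℝ) * (τ⁻¹) ^ k) := by
      intro n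
      induction n with
      | zero => simp
      | succ n ih =>
        have := hstep n
        rw [Finset.sum_range_succ, Finset.sum_range_succ]
        have hlt : Real.log τ * ((n:ℝ) * (τ⁻¹) ^ n) = Real.log τ * ((n:ℝ) * (τ⁻¹) ^ n) := rfl
        nlinarith [this, ih]
    -- limits of the partial sums
    have hr0 : (0:ℝ) ≤ τ⁻¹ := by positivity
    have hr1 : τ⁻¹ < 1 := by
      rw [inv_lt_one_iff₀]; right; exact hτ
    have hg1 : HasSum (fun k : ℕ => (τ⁻¹) ^ k) (1 - τ⁻¹)⁻¹ :=
      hasSum_geometric_of_lt_one hr0 hr1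
    have hg2 : HasSum (fun k : ℕ => (k : ℝ) * (τ⁻¹) ^ k) (τ⁻¹ / (1 - τ⁻¹) ^ 2) :=
      hasSum_coe_mul_geometric_of_norm_lt_one (by
        rw [Real.norm_eq_abs, abs_of_nonneg hr0]; exact hr1)
    have e1 : (1 - τ⁻¹)⁻¹ = τ / (τ - 1) := by
      rw [inv_eq_iff_eq_inv]
      field_simp
    have hpos1 : (0:ℝ) < 1 - τ⁻¹ := by linarith
    have hpos2 : (0:ℝ) < τ - 1 := by linarith
    have e2 : τ⁻¹ / (1 - τ⁻¹) ^ 2 = τ / (τ - 1) ^ 2 := by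
      rw [div_eq_div_iff (ne_of_gt (pow_pos hpos1 2)) (ne_of_gt (pow_pos hpos2 2))]
      field_simp
    -- the upper sequence tends to B
    set B : ℝ := b 0 + D * (τ / (τ - 1)) + Real.log τ * (τ / (τ - 1) ^ 2) with hB_def
    have hupper : Tendsto (fun n => b 0 + D * (∑ k ∈ Finset.range n, (τ⁻¹) ^ k) +
        Real.log τ * (∑ k ∈ Finset.range n, (k : ℝ) * (τ⁻¹) ^ k)) atTop (nhds B) := by
      rw [hB_def, ← e1, ← e2]
      exact ((tendsto_const_nhds.add
        (hg1.tendsto_sum_nat.const_mul D)).add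
        (hg2.tendsto_sum_nat.const_mul (Real.log τ)))
    -- the lower bound tends to log c
    have hlow : ∀ n : ℕ, Real.log c + Real.log δ * (τ⁻¹) ^ n ≤ b n := by
      intro n
      have h1 : c ^ (τ ^ n : ℝ) * δ ≤ I (τ ^ n) := hIlow _ (hτpow0 n).le
      have h2 : Real.log (c ^ (τ ^ n : ℝ) * δ) ≤ Real.log (I (τ ^ n)) :=
        Real.log_le_log (by positivity) h1
      rw [Real.log_mul (ne_of_gt (Real.rpow_pos_of_pos hc0 _)) (ne_of_gt hδ0),
        Real.log_rpow hc0] at h2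
      rw [hb_def]
      simp only
      rw [le_div_iff₀ (hτpow0 n)]
      calc (Real.log c + Real.log δ * (τ⁻¹) ^ n) * τ ^ n
          = τ ^ n * Real.log c + Real.log δ := by
            field_simp
            rw [add_mul, mul_assoc (Real.log δ), ← mul_pow, one_div, inv_mul_cancel₀ hτ0.ne', one_pow, mul_one]
        _ ≤ Real.log (I (τ ^ n)) := h2
    have hlow_tendsto : Tendsto (fun n : ℕ => Real.log c + Real.log δ * (τ⁻¹) ^ n)
        atTop (nhds (Real.log c)) := by
      have : Tendsto (fun n : ℕ => (τ⁻¹) ^ n) atTop (nhds 0) :=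
        tendsto_pow_atTop_nhds_zero_of_lt_one hr0 hr1
      simpa using tendsto_const_nhds.add ((this.const_mul (Real.log δ)))
    have hcB : Real.log c ≤ B := by
      refine le_of_tendsto_of_tendsto' hlow_tendsto hupper fun n => ?_
      exact (hlow n).trans (hsum n)
    -- b 0 ≤ L
    have hb0 : b 0 ≤ L := by
      have hI1 : I 1 = ∫ x, u x ∂μ := by
        simp only [hI_def]
        congr 1
        ext x
        rw [Real.rpow_one]
      have hI1pos : 0 < I 1 := hIpos 1 zero_le_one
      have : Real.log (I 1) ≤ L := by
        rw [Real.log_le_iff_le_exp hI1pos, hI1]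
        exact hL
      simpa [hb_def] using this
    rw [hB_def] at hcB
    linarith
  -- pass to the limit c → M
  have final : ∀ E : ℝ, (∀ c : ℝ, 0 < c → c < M → Real.log c ≤ E) →
      Real.log M ≤ E := by
    intro E hkey
    by_contra h
    push_neg at h
    have hc0 : 0 < Real.exp ((E + Real.log M) / 2) := Real.exp_pos _
    have hlogc : Real.log (Real.exp ((E + Real.log M) / 2)) = (E + Real.log M) / 2 :=
      Real.log_exp _
    have hcM : Real.exp ((E + Real.log M) / 2) < M := by
      have h2 : Real.exp ((E + Real.log M) / 2) < Real.exp (Real.log M) :=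
        Real.exp_lt_exp.mpr (by linarith)
      rwa [Real.exp_log hM0] at h2
    have := hkey _ hc0 hcM
    rw [hlogc] at this
    linarith
  have hME : Real.log M ≤ L + (Real.log (A * K) + β * Real.log M) * (τ / (τ - 1)) +
      Real.log τ * (τ / (τ - 1) ^ 2) := final _ key
  -- final algebra
  have hγ1 : 0 < 1 - β * τ / (τ - 1) := by linarith
  have hτ1 : (0:ℝ) < τ - 1 := by linarith
  have hexp : (Real.log (A * K) + β * Real.log M) * (τ / (τ - 1)) =
      (τ / (τ - 1)) * Real.log (A * K) + (β * τ / (τ - 1)) * Real.log M := by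
    field_simp
  rw [hexp] at hME
  rw [one_div, inv_mul_eq_div, le_div_iff₀ hγ1]
  nlinarith [hME]
end
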